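/- For any d×d real symmetric positive definite matrices A, B and C, det(A+B+C) + det(A) ≥ det(A+B) + det(A+C). -/

import Mathlib

open Matrix

variable {d : ℕ}

/-- rank one matrix `v vᵀ` is PSD -/
lemma aux_posSemidef_vecMulVec (v : Fin d → ℝ) : (vecMulVec v v).PosSemidef := by
  refine PosSemidef.of_dotProduct_mulVec_nonneg ?_ ?_
  · ext i j
    simp [vecMulVec_apply, conjTranspose_apply, mul_comm]
  · intro x
    have h : vecMulVec v v *ᵥ x = (v ⬝ᵥ x) • v := by
      ext i
      simp only [vecMulVec_apply, mulVec, dotProduct, Pi.smul_apply, smul_eq_mul, Finset.sum_mul, Finset.mul_sum]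
      exact Finset.sum_congr rfl fun j _ => by ring
    rw [h]
    have : star x ⬝ᵥ (v ⬝ᵥ x) • v = (v ⬝ᵥ x) * (v ⬝ᵥ x) := by
      simp [dotProduct_smul, star_trivial, dotProduct_comm, mul_comm]
    rw [this]
    exact mul_self_nonneg _

lemma aux_decomp {B : Matrix (Fin d) (Fin d) ℝ} (hB : B.PosSemidef) :
    ∃ w : Fin d → (Fin d → ℝ), B = ∑ i, vecMulVec (w i) (w i) := by
  obtain ⟨M, rfl⟩ : ∃ M : Matrix (Fin d) (Fin d) ℝ, B = Mᴴ * M := by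
    classical
    open scoped MatrixOrder in exact CStarAlgebra.nonneg_iff_eq_star_mul_self.mp hB.nonneg
  refine ⟨fun i j => M i j, ?_⟩
  ext j k
  simp [Matrix.mul_apply, vecMulVec_apply, Matrix.sum_apply, conjTranspose_apply]

lemma aux_det_two (X : Matrix (Fin d) (Fin d) ℝ) (hX : X.PosDef) (a b : Fin d → ℝ) :
    (X + vecMulVec a a + vecMulVec b b).det
      = X.det * ((1 + a ⬝ᵥ X⁻¹ *ᵥ a) * (1 + b ⬝ᵥ X⁻¹ *ᵥ b)
          - (a ⬝ᵥ X⁻¹ *ᵥ b) * (b ⬝ᵥ X⁻¹ *ᵥ a)) := by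
  classical
  have hdet : IsUnit X.det := isUnit_iff_ne_zero.mpr hX.det_pos.ne'
  set U : Matrix (Fin d) (Fin 2) ℝ := Matrix.of fun i j => ![a, b] j i with hU
  set V : Matrix (Fin 2) (Fin d) ℝ := Matrix.of fun j i => ![a, b] j i with hV
  have hUV : U * V = vecMulVec a a + vecMulVec b b := by
    ext i k
    simp [hU, hV, Matrix.mul_apply, Fin.sum_univ_two, vecMulVec_apply]
  have h := Matrix.det_add_mul U V hdet
  rw [hUV, ← add_assoc] at h
  rw [h]
  congr 1
  set W : Matrix (Fin 2) (Fin 2) ℝ := 1 + V * X⁻¹ * U with hW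
  have he : ∀ (u v : Fin d → ℝ) (j j' : Fin 2), (![a, b] j = u) → (![a, b] j' = v) →
      W j j' = (if j = j' then (1:ℝ) else 0) + u ⬝ᵥ X⁻¹ *ᵥ v := by
    intro u v j j' hu hv
    subst hu; subst hv
    simp only [hW, Matrix.add_apply, Matrix.one_apply, hU, hV, Matrix.mul_apply,
      Matrix.of_apply, dotProduct, mulVec, Finset.sum_mul, Finset.mul_sum]
    congr 1
    rw [Finset.sum_comm]
    exact Finset.sum_congr rfl fun i _ => Finset.sum_congr rfl fun k _ => by ring
  rw [det_fin_two, he a a 0 0 rfl rfl, he b b 1 1 rfl rfl, he a b 0 1 rfl rfl,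
    he b a 1 0 rfl rfl]
  norm_num

lemma aux_det_one (X : Matrix (Fin d) (Fin d) ℝ) (hX : X.PosDef) (a : Fin d → ℝ) :
    (X + vecMulVec a a).det = X.det * (1 + a ⬝ᵥ X⁻¹ *ᵥ a) := by
  have h := aux_det_two X hX a 0
  have h0 : vecMulVec (0 : Fin d → ℝ) (0 : Fin d → ℝ) = (0 : Matrix (Fin d) (Fin d) ℝ) := by
    ext i j; simp [vecMulVec_apply]
  rw [h0, add_zero] at h
  rw [h]
  simp

lemma aux_key (X : Matrix (Fin d) (Fin d) ℝ) (hX : X.PosDef) (a b : Fin d → ℝ) :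
    (X + vecMulVec a a).det + (X + vecMulVec b b).det
      ≤ (X + vecMulVec a a + vecMulVec b b).det + X.det := by
  have hdet := hX.det_pos
  have hinv : (X⁻¹).PosDef := hX.inv
  have hs : (X⁻¹)ᵀ = X⁻¹ := by
    have h := hX.isHermitian.inv
    rwa [Matrix.IsHermitian, conjTranspose_eq_transpose_of_trivial] at h
  have hsymm : b ⬝ᵥ X⁻¹ *ᵥ a = a ⬝ᵥ X⁻¹ *ᵥ b := by
    rw [dotProduct_mulVec b, ← mulVec_transpose, hs, dotProduct_comm]
  set p := a ⬝ᵥ X⁻¹ *ᵥ a with hp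
  set q := b ⬝ᵥ X⁻¹ *ᵥ b with hq
  set r := a ⬝ᵥ X⁻¹ *ᵥ b with hr
  -- Cauchy–Schwarz for the PD form X⁻¹
  have cs : r * r ≤ p * q := by
    have hquad : ∀ t : ℝ, 0 ≤ q * (t * t) + (2 * r) * t + p := by
      intro t
      have h0 := hinv.posSemidef.dotProduct_mulVec_nonneg (a + t • b)
      simp only [star_trivial, dotProduct_add, add_dotProduct, mulVec_add, mulVec_smul,
        dotProduct_smul, smul_dotProduct, smul_eq_mul, hsymm, ← hp, ← hq, ← hr] at h0
      nlinarith [h0]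
    have hd := discrim_le_zero hquad
    rw [discrim] at hd
    nlinarith [hd]
  rw [aux_det_two X hX a b, aux_det_one X hX a, aux_det_one X hX b, hsymm, ← hp, ← hq, ← hr]
  nlinarith [hdet, cs]

lemma aux_posSemidef_sum (w : Fin d → (Fin d → ℝ)) (S : Finset (Fin d)) :
    (∑ i ∈ S, vecMulVec (w i) (w i)).PosSemidef := by
  classical
  induction S using Finset.induction with
  | empty => simpa using Matrix.PosSemidef.zero
  | insert _ _ ha ih =>
      rw [Finset.sum_insert ha]
      exact (aux_posSemidef_vecMulVec _).add ih

lemma aux_L1 (X : Matrix (Fin d) (Fin d) ℝ) (hX : X.PosDef)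
    (B : Matrix (Fin d) (Fin d) ℝ) (hB : B.PosSemidef) (v : Fin d → ℝ) :
    (X + B).det + (X + vecMulVec v v).det ≤ (X + B + vecMulVec v v).det + X.det := by
  classical
  obtain ⟨w, rfl⟩ := aux_decomp hB
  have main : ∀ S : Finset (Fin d),
      (X + ∑ i ∈ S, vecMulVec (w i) (w i)).det + (X + vecMulVec v v).det ≤
      (X + ∑ i ∈ S, vecMulVec (w i) (w i) + vecMulVec v v).det + X.det := by
    intro S
    induction S using Finset.induction with
    | empty => simp; linarith
    | @insert a S ha ih =>
        rw [Finset.sum_insert ha]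
        set Y := ∑ i ∈ S, vecMulVec (w i) (w i) with hY
        have hXY : (X + Y).PosDef := hX.add_posSemidef (aux_posSemidef_sum w S)
        have hk := aux_key (X + Y) hXY (w a) v
        have e1 : X + (vecMulVec (w a) (w a) + Y) = X + Y + vecMulVec (w a) (w a) := by abel
        have e2 : X + (vecMulVec (w a) (w a) + Y) + vecMulVec v v
            = X + Y + vecMulVec (w a) (w a) + vecMulVec v v := by abel
        rw [e2, e1]
        have hk' : (X + Y + vecMulVec (w a) (w a)).det + (X + Y + vecMulVec v v).det
            ≤ (X + Y + vecMulVec (w a) (w a) + vecMulVec v v).det + (X + Y).det := hk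
        linarith [ih, hk']
  exact main Finset.univ

lemma aux_stmt8 (d : ℕ) (A B C : Matrix (Fin d) (Fin d) ℝ)
    (hA : A.PosDef) (hB : B.PosDef) (hC : C.PosDef) :
    (A + B).det + (A + C).det ≤ (A + B + C).det + A.det := by
  classical
  obtain ⟨w, hw⟩ := aux_decomp hC.posSemidef
  have main : ∀ S : Finset (Fin d),
      (A + B).det + (A + ∑ i ∈ S, vecMulVec (w i) (w i)).det ≤
      (A + B + ∑ i ∈ S, vecMulVec (w i) (w i)).det + A.det := by
    intro S
    induction S using Finset.induction with
    | empty => simp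
    | @insert a S ha ih =>
        rw [Finset.sum_insert ha]
        set Y := ∑ i ∈ S, vecMulVec (w i) (w i) with hY
        have hAY : (A + Y).PosDef := hA.add_posSemidef (aux_posSemidef_sum w S)
        have hk := aux_L1 (A + Y) hAY B hB.posSemidef (w a)
        have e1 : A + (vecMulVec (w a) (w a) + Y) = A + Y + vecMulVec (w a) (w a) := by abel
        have e2 : A + B + (vecMulVec (w a) (w a) + Y)
            = A + Y + B + vecMulVec (w a) (w a) := by abel
        have e3 : A + B + Y = A + Y + B := by abel
        rw [e1, e2]
        have hk' : (A + Y + B).det + (A + Y + vecMulVec (w a) (w a)).det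
            ≤ (A + Y + B + vecMulVec (w a) (w a)).det + (A + Y).det := hk
        rw [e3] at ih
        linarith [ih, hk']
  have := main Finset.univ
  rwa [← hw] at this

/-- For any d×d real symmetric positive definite matrices `A, B, C`,
`det(A+B+C) + det(A) ≥ det(A+B) + det(A+C)`. -/
theorem stmt8 (d : ℕ) (A B C : Matrix (Fin d) (Fin d) ℝ)
    (hAs : A.IsSymm) (hBs : B.IsSymm) (hCs : C.IsSymm)
    (hA : A.PosDef) (hB : B.PosDef) (hC : C.PosDef) :
    (A + B).det + (A + C).det ≤ (A + B + C).det + A.det := by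
  exact aux_stmt8 d A B C hA hB hC
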